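/- Let α, λ be real with λ ≥ 0, and set ω⁺ = -(α + √(α² + 4λ²))/2, ω⁻ = -(α - √(α² + 4λ²))/2, ω = ω⁺ - ω⁻. Then for every real t, |(ω⁺ e^{iω⁻ t} - ω⁻ e^{iω⁺ t})/ω|² = (α² + 4λ² cos²(ωt/2))/ω² ≤ 1. -/

import Mathlib

theorem stmt1 (α lam : ℝ) (hlam : 0 ≤ lam) (h : 0 < α ^ 2 + 4 * lam ^ 2) :
    let ωp : ℝ := -(α + Real.sqrt (α ^ 2 + 4 * lam ^ 2)) / 2
    let ωm : ℝ := -(α - Real.sqrt (α ^ 2 + 4 * lam ^ 2)) / 2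
    let ω : ℝ := ωp - ωm
    ∀ t : ℝ,
      ‖((ωp : ℂ) * Complex.exp (Complex.I * ωm * t)
          - (ωm : ℂ) * Complex.exp (Complex.I * ωp * t)) / (ω : ℂ)‖ ^ 2
        = (α ^ 2 + 4 * lam ^ 2 * Real.cos (ω * t / 2) ^ 2) / ω ^ 2 ∧
      ‖((ωp : ℂ) * Complex.exp (Complex.I * ωm * t)
          - (ωm : ℂ) * Complex.exp (Complex.I * ωp * t)) / (ω : ℂ)‖ ^ 2 ≤ 1 := by
  intro ωp ωm ω t
  have hs : 0 < Real.sqrt (α ^ 2 + 4 * lam ^ 2) := Real.sqrt_pos.mpr h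
  have hs2 : Real.sqrt (α ^ 2 + 4 * lam ^ 2) ^ 2 = α ^ 2 + 4 * lam ^ 2 :=
    Real.sq_sqrt h.le
  set s := Real.sqrt (α ^ 2 + 4 * lam ^ 2) with hsdef
  have hω : ω = -s := by simp only [ω, ωp, ωm]; ring
  have hωne : ω ≠ 0 := by rw [hω]; exact neg_ne_zero.mpr hs.ne'
  have hωCne : (ω : ℂ) ≠ 0 := by exact_mod_cast hωne
  set a : ℝ := ωm * t with ha
  set b : ℝ := ωp * t with hb
  have e1 : Complex.I * (ωm : ℂ) * t = (a : ℂ) * Complex.I := by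
    simp only [ha, Complex.ofReal_mul]; ring
  have e2 : Complex.I * (ωp : ℂ) * t = (b : ℂ) * Complex.I := by
    simp only [hb, Complex.ofReal_mul]; ring
  have hnum : ((ωp : ℂ) * Complex.exp (Complex.I * ωm * t)
      - (ωm : ℂ) * Complex.exp (Complex.I * ωp * t))
      = ((ωp * Real.cos a - ωm * Real.cos b : ℝ) : ℂ)
        + ((ωp * Real.sin a - ωm * Real.sin b : ℝ) : ℂ) * Complex.I := by
    rw [e1, e2, Complex.exp_mul_I, Complex.exp_mul_I]
    push_cast
    ring
  have habs : ‖((ωp : ℂ) * Complex.exp (Complex.I * ωm * t)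
      - (ωm : ℂ) * Complex.exp (Complex.I * ωp * t)) / (ω : ℂ)‖ ^ 2
      = ((ωp * Real.cos a - ωm * Real.cos b) ^ 2
        + (ωp * Real.sin a - ωm * Real.sin b) ^ 2) / ω ^ 2 := by
    rw [norm_div, div_pow, hnum, Complex.sq_norm, Complex.normSq_add_mul_I,
      Complex.norm_real, Real.norm_eq_abs, sq_abs]
  have hcos : Real.cos a * Real.cos b + Real.sin a * Real.sin b = Real.cos (ω * t) := by
    rw [← Real.cos_sub]
    have : a - b = -(ω * t) := by simp only [ha, hb, ω]; ring
    rw [this, Real.cos_neg]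
  have hhalf : Real.cos (ω * t) = 2 * Real.cos (ω * t / 2) ^ 2 - 1 := by
    have := Real.cos_sq (ω * t / 2)
    rw [show 2 * (ω * t / 2) = ω * t from by ring] at this
    linarith
  have hpm : ωp * ωm = -(lam ^ 2) := by
    simp only [ωp, ωm]
    linear_combination (-(1:ℝ)/4) * hs2
  have hsum : ωp + ωm = -α := by simp only [ωp, ωm]; ring
  have hω2 : ω ^ 2 = α ^ 2 + 4 * lam ^ 2 := by rw [hω]; linear_combination hs2
  have key : (ωp * Real.cos a - ωm * Real.cos b) ^ 2
        + (ωp * Real.sin a - ωm * Real.sin b) ^ 2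
      = α ^ 2 + 4 * lam ^ 2 * Real.cos (ω * t / 2) ^ 2 := by
    have h1 : Real.sin a ^ 2 + Real.cos a ^ 2 = 1 := Real.sin_sq_add_cos_sq a
    have h2 : Real.sin b ^ 2 + Real.cos b ^ 2 = 1 := Real.sin_sq_add_cos_sq b
    have hLHS : (ωp * Real.cos a - ωm * Real.cos b) ^ 2
          + (ωp * Real.sin a - ωm * Real.sin b) ^ 2
        = ωp ^ 2 + ωm ^ 2 - 2 * (ωp * ωm) * Real.cos (ω * t) := by
      linear_combination ωp ^ 2 * h1 + ωm ^ 2 * h2 - 2 * ωp * ωm * hcos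
    rw [hLHS]
    linear_combination (ωp + ωm - α) * hsum - (2 + 2 * Real.cos (ω * t)) * hpm
      - 2 * (ωp * ωm) * hhalf
      + (Real.cos (ω * t / 2) ^ 2 - 1 / 2 - Real.cos (ω * t) / 2) * hs2
  constructor
  · rw [habs, key]
  · rw [habs, key]
    rw [div_le_one (by positivity : (0:ℝ) < ω ^ 2), hω2]
    nlinarith [Real.cos_sq_le_one (ω * t / 2), sq_nonneg lam]
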